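/- Let E be a finite-dimensional Euclidean space and V, W ⊆ E be subspaces with W not contained in V. If w is a basis of W ∩ (V ∩ W)^⊥, then the angle σ(V,W) (defined as vol(v,w)/(vol(v)·vol(w)) for bases v of V ∩ (V∩W)^⊥ and w of W ∩ (V∩W)^⊥, where vol of a tuple of vectors is the square root of the determinant of their Gram matrix) satisfies σ(V,W) = vol(Π_{V^⊥}(w))/vol(w), where Π_{V^⊥} is the orthogonal projection onto V^⊥. -/

import Mathlib

open scoped InnerProductSpace

/-- The volume of a tuple of vectors: the square root of the determinant of
its Gram matrix. -/
noncomputable def tupleVol {E : Type*} [NormedAddCommGroup E] [InnerProductSpace ℝ E]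
    {k : ℕ} (f : Fin k → E) : ℝ :=
  Real.sqrt (Matrix.det (Matrix.of fun i j => (inner ℝ (f i) (f j) : ℝ)))

section helpers
variable {E : Type*} [NormedAddCommGroup E] [InnerProductSpace ℝ E]

lemma inner_sum_sum {m n : ℕ} (f : Fin m → E) (g : Fin n → E) (x : Fin m → ℝ) (y : Fin n → ℝ) :
    (inner ℝ (∑ i, x i • f i) (∑ j, y j • g j) : ℝ)
      = ∑ i, ∑ j, x i * y j * inner ℝ (f i) (g j) := by
  rw [sum_inner]
  refine Finset.sum_congr rfl fun i _ => ?_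
  rw [inner_sum]
  refine Finset.sum_congr rfl fun j _ => ?_
  rw [real_inner_smul_left, real_inner_smul_right]
  ring

lemma gram_posDef {n : ℕ} {f : Fin n → E} (hf : LinearIndependent ℝ f) :
    (Matrix.of fun i j => (inner ℝ (f i) (f j) : ℝ)).PosDef := by
  refine Matrix.PosDef.of_dotProduct_mulVec_pos ?_ ?_
  · ext i j
    simp [Matrix.conjTranspose, real_inner_comm]
  · intro x hx
    have key : dotProduct (star x) ((Matrix.of fun i j => (inner ℝ (f i) (f j) : ℝ)).mulVec x)
        = (inner ℝ (∑ i, x i • f i) (∑ j, x j • f j) : ℝ) := by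
      rw [inner_sum_sum]
      simp [dotProduct, Matrix.mulVec, Finset.mul_sum, mul_assoc, mul_comm, mul_left_comm]
    rw [key]
    have hne : (∑ i, x i • f i) ≠ 0 := by
      intro h
      exact hx (funext fun i => Fintype.linearIndependent_iff.mp hf x h i)
    rw [real_inner_self_eq_norm_sq]
    exact pow_pos (norm_pos_iff.mpr hne) 2

end helpers

/-- If `W ⊄ V` and `w` is a basis of `W ⊓ (V ⊓ W)ᗮ` (and `v` any basis of
`V ⊓ (V ⊓ W)ᗮ`), then the angle `σ(V,W) = vol(v w)/(vol v · vol w)` equals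
`vol(Π_{Vᗮ} w)/vol w`. -/
theorem stmt0 {E : Type*} [NormedAddCommGroup E] [InnerProductSpace ℝ E]
    [FiniteDimensional ℝ E] (V W : Submodule ℝ E) (hWV : ¬ W ≤ V)
    {k l : ℕ} (v : Module.Basis (Fin k) ℝ ↥(V ⊓ (V ⊓ W)ᗮ)) (w : Module.Basis (Fin l) ℝ ↥(W ⊓ (V ⊓ W)ᗮ)) :
    tupleVol (Fin.append (fun i => (v i : E)) (fun j => (w j : E))) /
        (tupleVol (fun i => (v i : E)) * tupleVol (fun j => (w j : E)))
      = tupleVol (fun j => ((Submodule.orthogonalProjection Vᗮ (w j : E) : Vᗮ) : E)) /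
          tupleVol (fun j => (w j : E)) := by

  classical
  set b : Fin l → E := fun j => ((Submodule.orthogonalProjection Vᗮ (w j : E) : Vᗮ) : E) with hbdef
  set aa : Fin l → E := fun j => ((Submodule.orthogonalProjection V (w j : E)) : E) with haadef
  have hsum : ∀ j, aa j + b j = (w j : E) := fun j =>
    V.starProjection_add_starProjection_orthogonal (w j : E)
  have hbV : ∀ j, b j ∈ Vᗮ := fun j => (Submodule.orthogonalProjection Vᗮ (w j : E)).2
  have haV : ∀ j, aa j ∈ V ⊓ (V ⊓ W)ᗮ := by
    intro j
    refine ⟨(Submodule.orthogonalProjection V (w j : E)).2, ?_⟩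
    intro u hu
    have h1 : (inner ℝ u (b j) : ℝ) = 0 := (hbV j) u hu.1
    have h2 : (inner ℝ u ((w j : E)) : ℝ) = 0 := (w j).2.2 u hu
    have h3 : (inner ℝ u (aa j) : ℝ) + (inner ℝ u (b j) : ℝ) = (inner ℝ u ((w j : E)) : ℝ) := by
      rw [← inner_add_right, hsum j]
    rw [h1, add_zero] at h3
    rw [h3]
    exact h2
  set M : Matrix (Fin k) (Fin l) ℝ := Matrix.of fun i j => v.repr ⟨aa j, haV j⟩ i with hMdef
  have ha_eq : ∀ j, aa j = ∑ i, M i j • (v i : E) := by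
    intro j
    have := v.sum_repr ⟨aa j, haV j⟩
    have h2 := congrArg (Submodule.subtype (V ⊓ (V ⊓ W)ᗮ)) this
    simp only [map_sum, map_smul, Submodule.subtype_apply] at h2
    rw [hMdef]
    simp only [Matrix.of_apply]
    exact h2.symm
  have hvb : ∀ i j, (inner ℝ ((v i : E)) (b j) : ℝ) = 0 := fun i j => (hbV j) _ (v i).2.1
  have hab : ∀ j j', (inner ℝ (aa j) (b j') : ℝ) = 0 := fun j j' => (hbV j') _ (haV j).1
  set A : Matrix (Fin k) (Fin k) ℝ := Matrix.of fun i i' => (inner ℝ ((v i : E)) ((v i' : E)) : ℝ) with hAdef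
  set B : Matrix (Fin k) (Fin l) ℝ := Matrix.of fun i j => (inner ℝ ((v i : E)) ((w j : E)) : ℝ) with hBdef
  set Bt : Matrix (Fin l) (Fin k) ℝ := Matrix.of fun j i => (inner ℝ ((w j : E)) ((v i : E)) : ℝ) with hBtdef
  set C : Matrix (Fin l) (Fin l) ℝ := Matrix.of fun j j' => (inner ℝ ((w j : E)) ((w j' : E)) : ℝ) with hCdef
  set D : Matrix (Fin l) (Fin l) ℝ := Matrix.of fun j j' => (inner ℝ (b j) (b j') : ℝ) with hDdef
  -- linear independence of v over E
  have hvind : LinearIndependent ℝ (fun i => (v i : E)) := by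
    exact v.linearIndependent.map' (Submodule.subtype _) (Submodule.ker_subtype _)
  have hA : A.PosDef := gram_posDef hvind
  haveI : Invertible A := A.invertibleOfIsUnitDet (isUnit_iff_ne_zero.mpr hA.det_pos.ne')
  -- B = A * M
  have hvaa : ∀ i j, (inner ℝ ((v i : E)) (aa j) : ℝ) = (A * M) i j := by
    intro i j
    rw [ha_eq j, inner_sum]
    simp [hAdef, hMdef, Matrix.mul_apply, real_inner_smul_right, mul_comm]
  have hB : B = A * M := by
    ext i j
    have : (inner ℝ ((v i : E)) ((w j : E)) : ℝ) = inner ℝ ((v i : E)) (aa j) + inner ℝ ((v i : E)) (b j) := by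
      rw [← inner_add_right, hsum j]
    rw [hBdef]
    simp only [Matrix.of_apply]
    rw [this, hvb i j, add_zero, hvaa i j]
  have hBt : Bt = M.transpose * A := by
    ext j i
    have h1 : (inner ℝ ((w j : E)) ((v i : E)) : ℝ) = inner ℝ (aa j) ((v i : E)) + inner ℝ (b j) ((v i : E)) := by
      rw [← inner_add_left, hsum j]
    have h2 : (inner ℝ (b j) ((v i : E)) : ℝ) = 0 := by rw [real_inner_comm]; exact hvb i j
    rw [hBtdef]
    simp only [Matrix.of_apply]
    rw [h1, h2, add_zero, ha_eq j, sum_inner]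
    simp [hAdef, hMdef, Matrix.mul_apply, Matrix.transpose_apply, real_inner_smul_left]
  have haaaa : ∀ j j', (inner ℝ (aa j) (aa j') : ℝ) = (M.transpose * A * M) j j' := by
    intro j j'
    rw [ha_eq j, ha_eq j', inner_sum_sum]
    rw [Matrix.mul_assoc]
    simp only [Matrix.mul_apply, Matrix.transpose_apply, Matrix.of_apply,
      Finset.mul_sum, Finset.sum_mul]
    refine Finset.sum_congr rfl fun i _ => Finset.sum_congr rfl fun t _ => ?_
    simp only [hAdef, Matrix.of_apply]
    ring
  have hC : C = M.transpose * A * M + D := by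
    ext j j'
    have hba : (inner ℝ (b j) (aa j') : ℝ) = 0 := by rw [real_inner_comm]; exact hab j' j
    have : (inner ℝ ((w j : E)) ((w j' : E)) : ℝ)
        = inner ℝ (aa j) (aa j') + inner ℝ (b j) (b j') := by
      rw [← hsum j, ← hsum j', inner_add_left, inner_add_right, inner_add_right,
        hab j j', hba]
      ring
    rw [hCdef]
    simp only [Matrix.of_apply, Matrix.add_apply]
    rw [this, haaaa j j']
    rfl
  -- block determinant
  have hdet : (Matrix.of fun p q => (inner ℝ (Fin.append (fun i => (v i : E)) (fun j => (w j : E)) p)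
        (Fin.append (fun i => (v i : E)) (fun j => (w j : E)) q) : ℝ)).det = A.det * D.det := by
    have hGram : (Matrix.of fun p q => (inner ℝ (Fin.append (fun i => (v i : E)) (fun j => (w j : E)) p)
        (Fin.append (fun i => (v i : E)) (fun j => (w j : E)) q) : ℝ))
        = (Matrix.fromBlocks A B Bt C).submatrix finSumFinEquiv.symm finSumFinEquiv.symm := by
      ext p q
      simp only [Matrix.submatrix_apply, Matrix.of_apply]
      refine Fin.addCases (fun i => ?_) (fun i => ?_) p <;>
        refine Fin.addCases (fun j => ?_) (fun j => ?_) q <;>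
        simp [Fin.append_left, Fin.append_right, finSumFinEquiv_symm_apply_castAdd,
          finSumFinEquiv_symm_apply_natAdd, Matrix.fromBlocks, hAdef, hBdef, hBtdef, hCdef]
    rw [hGram, Matrix.det_submatrix_equiv_self, Matrix.det_fromBlocks₁₁]
    congr 1
    rw [hB, hBt]
    have : M.transpose * A * ⅟A * (A * M) = M.transpose * A * M := by
      rw [Matrix.mul_assoc (M.transpose * A) (⅟A) (A * M), ← Matrix.mul_assoc (⅟A) A M,
        invOf_mul_self, Matrix.one_mul]
    rw [this, hC, add_sub_cancel_left]
  -- assemble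
  have hv_vol : tupleVol (fun i => (v i : E)) = Real.sqrt A.det := rfl
  have hw_vol : tupleVol (fun j => (w j : E)) = Real.sqrt C.det := rfl
  have hb_vol : tupleVol b = Real.sqrt D.det := rfl
  have hf_vol : tupleVol (Fin.append (fun i => (v i : E)) (fun j => (w j : E)))
      = Real.sqrt A.det * Real.sqrt D.det := by
    rw [tupleVol, hdet, Real.sqrt_mul hA.det_pos.le]
  rw [hf_vol, hv_vol, hw_vol, hb_vol]
  have hAne : Real.sqrt A.det ≠ 0 := Real.sqrt_ne_zero'.mpr hA.det_pos
  rw [mul_div_mul_left _ _ hAne]
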